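/- For two distinct observations x_1 ≠ x_2 from a k-component Gaussian mixture with prior π(μ,σ) = 1/σ and proper independent priors on the remaining parameters, the marginal likelihood M_k(x_1,x_2) is finite, hence the posterior distribution is proper. -/

import Mathlib

open MeasureTheory Finset

/-- The Gaussian density with mean `m` and standard deviation `s`. -/
noncomputable def normalPDF (m s x : ℝ) : ℝ :=
  (Real.sqrt (2 * Real.pi) * s)⁻¹ * Real.exp (-((x - m) ^ 2 / (2 * s ^ 2)))

open Real in
lemma normalPDF_nonneg (m s x : ℝ) (hs : 0 ≤ s) : 0 ≤ normalPDF m s x := by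
  unfold normalPDF; positivity

open Real in
lemma integrable_normalPDF (m s : ℝ) (hs : 0 < s) : Integrable (normalPDF m s) := by
  have hb : (0:ℝ) < (2 * s ^ 2)⁻¹ := by positivity
  have h := ((integrable_exp_neg_mul_sq hb).comp_sub_right m).const_mul
      (Real.sqrt (2 * Real.pi) * s)⁻¹
  refine h.congr ?_
  filter_upwards with x
  unfold normalPDF
  ring_nf

open Real in
lemma integral_normalPDF (m s : ℝ) (hs : 0 < s) : ∫ x, normalPDF m s x = 1 := by
  have hb : (0:ℝ) < (2 * s ^ 2)⁻¹ := by positivity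
  have h1 : ∫ x, normalPDF m s x
      = (Real.sqrt (2 * Real.pi) * s)⁻¹ * ∫ x, Real.exp (-((2 * s ^ 2)⁻¹ * (x - m) ^ 2)) := by
    rw [← MeasureTheory.integral_const_mul]
    congr 1; ext x; unfold normalPDF; ring_nf
  have h2 : (∫ x, Real.exp (-((2 * s ^ 2)⁻¹ * (x - m) ^ 2)))
      = ∫ x, Real.exp (-((2 * s ^ 2)⁻¹) * x ^ 2) := by
    rw [← integral_sub_right_eq_self (fun x => Real.exp (-((2 * s ^ 2)⁻¹) * x ^ 2)) m]
    congr 1; ext x; ring_nf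
  rw [h1, h2, integral_gaussian]
  have h3 : Real.sqrt (π / (2 * s ^ 2)⁻¹) = Real.sqrt (2 * π) * s := by
    rw [show π / (2 * s ^ 2)⁻¹ = (2 * π) * s ^ 2 by field_simp,
      Real.sqrt_mul (by positivity), Real.sqrt_sq hs.le]
  rw [h3]
  have h4 : Real.sqrt (2 * π) * s ≠ 0 := by positivity
  field_simp

open Real in
lemma lintegral_ofReal_normalPDF (m s : ℝ) (hs : 0 < s) :
    ∫⁻ x, ENNReal.ofReal (normalPDF m s x) = 1 := by
  rw [← ofReal_integral_eq_lintegral_ofReal (integrable_normalPDF m s hs)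
      (Filter.Eventually.of_forall fun x => normalPDF_nonneg m s x hs.le),
    integral_normalPDF m s hs, ENNReal.ofReal_one]

open Real in
lemma normalPDF_mul (A B μ s₁ s₂ : ℝ) (h₁ : 0 < s₁) (h₂ : 0 < s₂) :
    normalPDF A s₁ μ * normalPDF B s₂ μ
      = normalPDF B (Real.sqrt (s₁ ^ 2 + s₂ ^ 2)) A *
        normalPDF ((A * s₂ ^ 2 + B * s₁ ^ 2) / (s₁ ^ 2 + s₂ ^ 2))
          (s₁ * s₂ / Real.sqrt (s₁ ^ 2 + s₂ ^ 2)) μ := by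
  set S := Real.sqrt (s₁ ^ 2 + s₂ ^ 2) with hSdef
  have hS : 0 < S := Real.sqrt_pos.mpr (by positivity)
  have hS2 : S ^ 2 = s₁ ^ 2 + s₂ ^ 2 := Real.sq_sqrt (by positivity)
  unfold normalPDF
  rw [mul_mul_mul_comm, mul_mul_mul_comm ((Real.sqrt (2*π) * S)⁻¹), ← Real.exp_add, ← Real.exp_add]
  have hc : (Real.sqrt (2*π) * s₁)⁻¹ * (Real.sqrt (2*π) * s₂)⁻¹
      = (Real.sqrt (2*π) * S)⁻¹ * (Real.sqrt (2*π) * (s₁ * s₂ / S))⁻¹ := by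
    have h2π : (0:ℝ) < Real.sqrt (2*π) := Real.sqrt_pos.mpr (by positivity)
    field_simp
  rw [hc]
  congr 2
  rw [div_pow, hS2]
  field_simp
  ring

open Real in
lemma lintegral_mu (x₁ x₂ a₁ a₂ t₁ t₂ σ : ℝ) (hσ : 0 < σ) (h₁ : 0 < t₁) (h₂ : 0 < t₂) :
    ∫⁻ μ, ENNReal.ofReal
        (normalPDF (μ + σ * a₁) (σ * t₁) x₁ * normalPDF (μ + σ * a₂) (σ * t₂) x₂)
      = ENNReal.ofReal (normalPDF (σ * (a₁ - a₂)) (σ * Real.sqrt (t₁ ^ 2 + t₂ ^ 2)) (x₁ - x₂)) := by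
  have hs₁ : (0:ℝ) < σ * t₁ := by positivity
  have hs₂ : (0:ℝ) < σ * t₂ := by positivity
  set A := x₁ - σ * a₁
  set B := x₂ - σ * a₂
  set S := Real.sqrt ((σ * t₁) ^ 2 + (σ * t₂) ^ 2) with hSdef
  have hS : 0 < S := Real.sqrt_pos.mpr (by positivity)
  have hstep : ∀ μ : ℝ,
      normalPDF (μ + σ * a₁) (σ * t₁) x₁ * normalPDF (μ + σ * a₂) (σ * t₂) x₂
        = normalPDF B S A *
          normalPDF ((A * (σ * t₂) ^ 2 + B * (σ * t₁) ^ 2) / ((σ * t₁) ^ 2 + (σ * t₂) ^ 2))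
            ((σ * t₁) * (σ * t₂) / S) μ := by
    intro μ
    rw [show normalPDF (μ + σ * a₁) (σ * t₁) x₁ = normalPDF A (σ * t₁) μ by
        unfold normalPDF A; ring_nf,
      show normalPDF (μ + σ * a₂) (σ * t₂) x₂ = normalPDF B (σ * t₂) μ by
        unfold normalPDF B; ring_nf]
    exact normalPDF_mul A B μ _ _ hs₁ hs₂
  simp_rw [hstep]
  have hnn : 0 ≤ normalPDF B S A := normalPDF_nonneg _ _ _ hS.le
  simp_rw [ENNReal.ofReal_mul hnn]
  rw [lintegral_const_mul' _ _ ENNReal.ofReal_ne_top,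
    lintegral_ofReal_normalPDF _ _ (by positivity), mul_one]
  congr 1
  have hSS : S = σ * Real.sqrt (t₁ ^ 2 + t₂ ^ 2) := by
    rw [hSdef, show (σ * t₁) ^ 2 + (σ * t₂) ^ 2 = σ ^ 2 * (t₁ ^ 2 + t₂ ^ 2) by ring,
      Real.sqrt_mul (by positivity), Real.sqrt_sq hσ.le]
  rw [hSS]
  unfold normalPDF A B
  ring_nf

open Real in
lemma lintegral_sigma (d c t : ℝ) (hd : 0 < d) (ht : 0 < t) :
    ∫⁻ σ in Set.Ioi (0:ℝ), ENNReal.ofReal (σ⁻¹ * normalPDF (σ * c) (σ * t) d)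
      ≤ ENNReal.ofReal d⁻¹ := by
  set g : ℝ → ℝ := fun σ => σ⁻¹ * normalPDF (σ * c) (σ * t) d with hg
  set K : ℝ := (Real.sqrt (2 * π) * d)⁻¹ with hK
  set h : ℝ → ℝ := fun u => K * Real.exp (-(2⁻¹ * (u - c / t) ^ 2)) with hh
  set f : ℝ → ℝ := fun u => d / t * u⁻¹ with hf
  set f' : ℝ → ℝ := fun u => d / t * (-(u ^ 2)⁻¹) with hf'
  have hmaps : ∀ u ∈ Set.Ioi (0:ℝ), f u ∈ Set.Ioi (0:ℝ) := fun u hu => by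
    simp only [hf, Set.mem_Ioi] at *; positivity
  have hinv : ∀ u ∈ Set.Ioi (0:ℝ), f (f u) = u := fun u hu => by
    simp only [hf]; field_simp
  have himg : f '' Set.Ioi 0 = Set.Ioi 0 := by
    apply Set.Subset.antisymm
    · rintro _ ⟨u, hu, rfl⟩; exact hmaps u hu
    · intro σ hσ; exact ⟨f σ, hmaps σ hσ, hinv σ hσ⟩
  have hinj : Set.InjOn f (Set.Ioi 0) := fun a ha b hb hab => by
    rw [← hinv a ha, ← hinv b hb, hab]
  have hderiv : ∀ u ∈ Set.Ioi (0:ℝ), HasDerivWithinAt f (f' u) (Set.Ioi 0) u := by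
    intro u hu
    exact ((hasDerivAt_inv (ne_of_gt hu)).const_mul (d / t)).hasDerivWithinAt
  have hkey : ∀ u ∈ Set.Ioi (0:ℝ), |f' u| • g (f u) = h u := by
    intro u hu
    have hu0 : (0:ℝ) < u := hu
    have habs : |f' u| = d / t * (u ^ 2)⁻¹ := by
      simp only [hf', mul_neg, abs_neg, abs_mul, abs_of_pos (show (0:ℝ) < d / t by positivity),
        abs_of_pos (show (0:ℝ) < (u ^ 2)⁻¹ by positivity)]
    have hexp : -((d - d / t * u⁻¹ * c) ^ 2 / (2 * (d / t * u⁻¹ * t) ^ 2))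
        = -(2⁻¹ * (u - c / t) ^ 2) := by
      field_simp
    simp only [smul_eq_mul, habs, hg, hf, hh, hK]
    unfold normalPDF
    rw [hexp]
    have h2π : (0:ℝ) < Real.sqrt (2 * π) := Real.sqrt_pos.mpr (by positivity)
    field_simp
  have hb : (0:ℝ) < 2⁻¹ := by norm_num
  have hIh : Integrable h := by
    refine (((integrable_exp_neg_mul_sq hb).comp_sub_right (c / t)).const_mul K).congr ?_
    filter_upwards with u
    simp only [hh]
    ring_nf
  have hIhs : IntegrableOn h (Set.Ioi 0) := hIh.integrableOn
  have hIg : IntegrableOn g (Set.Ioi 0) := by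
    rw [← himg]
    rw [integrableOn_image_iff_integrableOn_abs_deriv_smul measurableSet_Ioi hderiv hinj g]
    exact hIhs.congr_fun (fun u hu => (hkey u hu).symm) measurableSet_Ioi
  have hval : ∫ σ in Set.Ioi (0:ℝ), g σ = ∫ u in Set.Ioi (0:ℝ), h u := by
    conv_lhs => rw [← himg]
    rw [integral_image_eq_integral_abs_deriv_smul measurableSet_Ioi hderiv hinj g]
    exact setIntegral_congr_fun measurableSet_Ioi hkey
  have hnn : ∀ u, 0 ≤ h u := fun u => by
    simp only [hh, hK]; positivity
  have htot : ∫ u, h u = d⁻¹ := by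
    rw [hh, MeasureTheory.integral_const_mul]
    have : (∫ u : ℝ, Real.exp (-(2⁻¹ * (u - c / t) ^ 2)))
        = ∫ u : ℝ, Real.exp (-2⁻¹ * u ^ 2) := by
      rw [← integral_sub_right_eq_self (fun u => Real.exp (-2⁻¹ * u ^ 2)) (c / t)]
      congr 1; ext u; ring_nf
    rw [this, integral_gaussian]
    have hsq : Real.sqrt (π / 2⁻¹) = Real.sqrt (2 * π) := by
      norm_num [mul_comm]
    rw [hsq, hK]
    have h2π : (0:ℝ) < Real.sqrt (2 * π) := Real.sqrt_pos.mpr (by positivity)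
    field_simp
  have hle : ∫ σ in Set.Ioi (0:ℝ), g σ ≤ d⁻¹ := by
    rw [hval, ← htot]
    exact setIntegral_le_integral hIh (Filter.Eventually.of_forall hnn)
  have hgnn : 0 ≤ᵐ[volume.restrict (Set.Ioi (0:ℝ))] g := by
    filter_upwards [ae_restrict_mem measurableSet_Ioi] with σ hσ
    have h0 : (0:ℝ) < σ := hσ
    simp only [hg]
    unfold normalPDF
    positivity
  calc ∫⁻ σ in Set.Ioi (0:ℝ), ENNReal.ofReal (g σ)
      = ENNReal.ofReal (∫ σ in Set.Ioi (0:ℝ), g σ) :=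
        (ofReal_integral_eq_lintegral_ofReal hIg hgnn).symm
    _ ≤ ENNReal.ofReal d⁻¹ := ENNReal.ofReal_le_ofReal hle

open Real in
lemma lintegral_sigma' (d c t : ℝ) (hd : d ≠ 0) (ht : 0 < t) :
    ∫⁻ σ in Set.Ioi (0:ℝ), ENNReal.ofReal (σ⁻¹ * normalPDF (σ * c) (σ * t) d)
      ≤ ENNReal.ofReal |d|⁻¹ := by
  rcases hd.lt_or_gt with hneg | hpos
  · have hrw : ∀ σ : ℝ, normalPDF (σ * c) (σ * t) d = normalPDF (σ * (-c)) (σ * t) (-d) := by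
      intro σ; unfold normalPDF; ring_nf
    simp_rw [hrw]
    rw [abs_of_neg hneg]
    exact lintegral_sigma (-d) (-c) t (by linarith) ht
  · rw [abs_of_pos hpos]
    exact lintegral_sigma d c t hpos ht

/-- For two distinct observations `x₁ ≠ x₂` from a `k`-component Gaussian mixture, with the
improper prior `π(μ,σ) = 1/σ` and a proper independent prior `Q` on the remaining
parameters, the marginal likelihood is finite: the posterior is proper. -/
theorem gaussian_mixture_posterior_proper_two_obs
    {Θ : Type*} [MeasurableSpace Θ] (Q : Measure Θ) [IsProbabilityMeasure Q] (k : ℕ)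
    (p α τ : Θ → Fin k → ℝ)
    (hp : ∀ θ i, 0 ≤ p θ i) (hpsum : ∀ θ, ∑ i, p θ i = 1)
    (hτ : ∀ θ i, 0 < τ θ i) (x₁ x₂ : ℝ) (hx : x₁ ≠ x₂) :
    ∫⁻ θ, ∫⁻ μ, ∫⁻ σ in Set.Ioi (0 : ℝ),
        ENNReal.ofReal
          ((∑ i, p θ i * normalPDF (μ + σ * α θ i) (σ * τ θ i) x₁) *
            (∑ i, p θ i * normalPDF (μ + σ * α θ i) (σ * τ θ i) x₂) * σ⁻¹)
      ∂volume ∂volume ∂Q < ⊤ := by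
  set d : ℝ := x₁ - x₂ with hd
  have hd0 : d ≠ 0 := sub_ne_zero.mpr hx
  have key : ∀ θ, (∫⁻ μ, ∫⁻ σ in Set.Ioi (0 : ℝ),
      ENNReal.ofReal
        ((∑ i, p θ i * normalPDF (μ + σ * α θ i) (σ * τ θ i) x₁) *
          (∑ i, p θ i * normalPDF (μ + σ * α θ i) (σ * τ θ i) x₂) * σ⁻¹)
        ∂volume ∂volume) ≤ ENNReal.ofReal |d|⁻¹ := by
    intro θ
    rw [lintegral_lintegral_swap (Measurable.aemeasurable (by
      unfold normalPDF; fun_prop))]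
    have h1 : ∀ σ ∈ Set.Ioi (0:ℝ),
        (∫⁻ μ, ENNReal.ofReal
          ((∑ i, p θ i * normalPDF (μ + σ * α θ i) (σ * τ θ i) x₁) *
            (∑ i, p θ i * normalPDF (μ + σ * α θ i) (σ * τ θ i) x₂) * σ⁻¹))
        = ∑ q : Fin k × Fin k, ENNReal.ofReal (p θ q.1 * p θ q.2) *
            ENNReal.ofReal (σ⁻¹ * normalPDF (σ * (α θ q.1 - α θ q.2))
              (σ * Real.sqrt (τ θ q.1 ^ 2 + τ θ q.2 ^ 2)) d) := by
      intro σ hσ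
      have hσ0 : (0:ℝ) < σ := hσ
      have hpt : ∀ μ : ℝ,
          (∑ i, p θ i * normalPDF (μ + σ * α θ i) (σ * τ θ i) x₁) *
            (∑ i, p θ i * normalPDF (μ + σ * α θ i) (σ * τ θ i) x₂) * σ⁻¹
          = ∑ q : Fin k × Fin k, (p θ q.1 * p θ q.2) *
              (σ⁻¹ * (normalPDF (μ + σ * α θ q.1) (σ * τ θ q.1) x₁ *
                normalPDF (μ + σ * α θ q.2) (σ * τ θ q.2) x₂)) := by
        intro μ
        rw [Fintype.sum_prod_type, Finset.sum_mul_sum, Finset.sum_mul]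
        refine Finset.sum_congr rfl fun i _ => ?_
        rw [Finset.sum_mul]
        exact Finset.sum_congr rfl fun j _ => by ring
      simp_rw [hpt]
      have hterm : ∀ (μ : ℝ) (q : Fin k × Fin k),
          ENNReal.ofReal ((p θ q.1 * p θ q.2) *
              (σ⁻¹ * (normalPDF (μ + σ * α θ q.1) (σ * τ θ q.1) x₁ *
                normalPDF (μ + σ * α θ q.2) (σ * τ θ q.2) x₂)))
          = ENNReal.ofReal (p θ q.1 * p θ q.2) * (ENNReal.ofReal σ⁻¹ *
              ENNReal.ofReal (normalPDF (μ + σ * α θ q.1) (σ * τ θ q.1) x₁ *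
                normalPDF (μ + σ * α θ q.2) (σ * τ θ q.2) x₂)) := by
        intro μ q
        rw [ENNReal.ofReal_mul (mul_nonneg (hp θ q.1) (hp θ q.2)),
          ENNReal.ofReal_mul (inv_nonneg.2 hσ0.le)]
      have hsum : ∀ μ : ℝ,
          ENNReal.ofReal (∑ q : Fin k × Fin k, (p θ q.1 * p θ q.2) *
              (σ⁻¹ * (normalPDF (μ + σ * α θ q.1) (σ * τ θ q.1) x₁ *
                normalPDF (μ + σ * α θ q.2) (σ * τ θ q.2) x₂)))
          = ∑ q : Fin k × Fin k, ENNReal.ofReal (p θ q.1 * p θ q.2) * (ENNReal.ofReal σ⁻¹ *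
              ENNReal.ofReal (normalPDF (μ + σ * α θ q.1) (σ * τ θ q.1) x₁ *
                normalPDF (μ + σ * α θ q.2) (σ * τ θ q.2) x₂)) := by
        intro μ
        rw [ENNReal.ofReal_sum_of_nonneg fun q _ =>
          mul_nonneg (mul_nonneg (hp θ q.1) (hp θ q.2))
            (mul_nonneg (inv_nonneg.2 hσ0.le)
              (mul_nonneg
                (normalPDF_nonneg (μ + σ * α θ q.1) (σ * τ θ q.1) x₁
                  (by have := hτ θ q.1; positivity))
                (normalPDF_nonneg (μ + σ * α θ q.2) (σ * τ θ q.2) x₂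
                  (by have := hτ θ q.2; positivity))))]
        exact Finset.sum_congr rfl fun q _ => hterm μ q
      simp_rw [hsum]
      rw [lintegral_finset_sum _ (fun q _ => by unfold normalPDF; fun_prop)]
      refine Finset.sum_congr rfl fun q _ => ?_
      rw [lintegral_const_mul' _ _ ENNReal.ofReal_ne_top,
        lintegral_const_mul' _ _ ENNReal.ofReal_ne_top,
        lintegral_mu x₁ x₂ (α θ q.1) (α θ q.2) (τ θ q.1) (τ θ q.2) σ hσ0
          (hτ θ q.1) (hτ θ q.2),
        ← ENNReal.ofReal_mul (inv_nonneg.2 hσ0.le)]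
    calc ∫⁻ σ in Set.Ioi (0:ℝ), ∫⁻ μ, ENNReal.ofReal
          ((∑ i, p θ i * normalPDF (μ + σ * α θ i) (σ * τ θ i) x₁) *
            (∑ i, p θ i * normalPDF (μ + σ * α θ i) (σ * τ θ i) x₂) * σ⁻¹)
        ≤ ∫⁻ σ in Set.Ioi (0:ℝ), ∑ q : Fin k × Fin k, ENNReal.ofReal (p θ q.1 * p θ q.2) *
            ENNReal.ofReal (σ⁻¹ * normalPDF (σ * (α θ q.1 - α θ q.2))
              (σ * Real.sqrt (τ θ q.1 ^ 2 + τ θ q.2 ^ 2)) d) :=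
          setLIntegral_mono' measurableSet_Ioi fun σ hσ => le_of_eq (h1 σ hσ)
      _ = ∑ q : Fin k × Fin k, ENNReal.ofReal (p θ q.1 * p θ q.2) *
            ∫⁻ σ in Set.Ioi (0:ℝ), ENNReal.ofReal (σ⁻¹ * normalPDF (σ * (α θ q.1 - α θ q.2))
              (σ * Real.sqrt (τ θ q.1 ^ 2 + τ θ q.2 ^ 2)) d) := by
          rw [lintegral_finset_sum _ (fun q _ => by unfold normalPDF; fun_prop)]
          exact Finset.sum_congr rfl fun q _ =>
            lintegral_const_mul' _ _ ENNReal.ofReal_ne_top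
      _ ≤ ∑ q : Fin k × Fin k, ENNReal.ofReal (p θ q.1 * p θ q.2) * ENNReal.ofReal |d|⁻¹ := by
          refine Finset.sum_le_sum fun q _ => mul_le_mul_right ?_ _
          exact lintegral_sigma' d (α θ q.1 - α θ q.2) (Real.sqrt (τ θ q.1 ^ 2 + τ θ q.2 ^ 2))
            hd0 (Real.sqrt_pos.mpr (by have := hτ θ q.1; have := hτ θ q.2; positivity))
      _ = ENNReal.ofReal |d|⁻¹ := by
          rw [← Finset.sum_mul, ← ENNReal.ofReal_sum_of_nonneg
            (fun q _ => mul_nonneg (hp θ q.1) (hp θ q.2))]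
          rw [show (∑ q : Fin k × Fin k, p θ q.1 * p θ q.2) = 1 by
            rw [Fintype.sum_prod_type, ← Finset.sum_mul_sum, hpsum θ, mul_one]]
          rw [ENNReal.ofReal_one, one_mul]
  calc ∫⁻ θ, ∫⁻ μ, ∫⁻ σ in Set.Ioi (0 : ℝ), ENNReal.ofReal
        ((∑ i, p θ i * normalPDF (μ + σ * α θ i) (σ * τ θ i) x₁) *
          (∑ i, p θ i * normalPDF (μ + σ * α θ i) (σ * τ θ i) x₂) * σ⁻¹)
        ∂volume ∂volume ∂Q
      ≤ ∫⁻ _, ENNReal.ofReal |d|⁻¹ ∂Q := lintegral_mono key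
    _ = ENNReal.ofReal |d|⁻¹ := by rw [lintegral_const, measure_univ, mul_one]
    _ < ⊤ := ENNReal.ofReal_lt_top
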